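/- Let P be a finite graded poset with minimum 0̂ and an ER-labeling λ (an edge labeling into a poset of labels Λ such that every closed interval [x,y] has exactly one maximal chain whose labels read from bottom to top are strictly increasing). Then for all x ≤ y in P, μ(x,y) = (-1)^{ρ(y)-ρ(x)} times the number of ascent-free maximal chains in [x,y], where a maximal chain x = x_0 ⋖ x_1 ⋖ ... ⋖ x_ℓ = y is ascent-free if for no i is λ(x_{i-1} ⋖ x_i) < λ(x_i ⋖ x_{i+1}). -/

import Mathlib

attribute [local instance] Classical.propDecidable

/-- The Möbius function of a finite poset (preorder suffices for the recursion),
defined by `μ x x = 1` and `μ x y = -∑_{x ≤ z < y} μ x z`. -/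
noncomputable def mobius {P : Type} [Preorder P] [Fintype P] (x : P) : P → ℤ
  | y =>
    if x = y then 1
    else -∑ z ∈ (Finset.univ.filter fun z : P => x ≤ z ∧ z < y).attach, mobius x z.1
termination_by y => (Finset.univ.filter fun z : P => z < y).card
decreasing_by
  have hz := z.2
  simp only [Finset.mem_filter] at hz
  refine Finset.card_lt_card ((Finset.ssubset_iff_of_subset fun w hw => ?_).mpr ⟨z.1, ?_, ?_⟩)
  · simp only [Finset.mem_filter] at hw ⊢
    exact ⟨hw.1, hw.2.trans hz.2.2⟩
  · simp only [Finset.mem_filter]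
    exact ⟨Finset.mem_univ _, hz.2.2⟩
  · simp only [Finset.mem_filter, not_and]
    exact fun _ => lt_irrefl _

/-- The `k`-th Whitney number of the first kind of a finite graded poset with
minimum `b` and rank function `ρ`: `w_k = ∑_{ρ x = k} μ(b, x)`. -/
noncomputable def whitney1 {P : Type} [Preorder P] [Fintype P] (ρ : P → ℕ) (b : P) (k : ℕ) : ℤ :=
  ∑ x ∈ Finset.univ.filter fun x : P => ρ x = k, mobius b x

/-- The `k`-th Whitney number of the second kind: the number of elements of rank `k`. -/
noncomputable def whitney2 {P : Type} [Preorder P] [Fintype P] (ρ : P → ℕ) (k : ℕ) : ℕ :=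
  (Finset.univ.filter fun x : P => ρ x = k).card
/-- A saturated chain in a poset: a nonempty list of elements in which each
consecutive pair is a covering relation. -/
def IsSatChain {P : Type} [PartialOrder P] (l : List P) : Prop :=
  l ≠ [] ∧ l.Chain' (· ⋖ ·)

/-- A saturated (maximal) chain of the closed interval `[x, y]`: a saturated chain
starting at `x` and ending at `y`. -/
def SatChainIn {P : Type} [PartialOrder P] (x y : P) (l : List P) : Prop :=
  IsSatChain l ∧ l.head? = some x ∧ l.getLast? = some y

/-- The word of labels of a chain `x₀ ⋖ x₁ ⋖ ⋯ ⋖ x_ℓ` under the edge labeling `lab`,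
namely `lab x₀ x₁, lab x₁ x₂, …, lab x_{ℓ-1} x_ℓ`. -/
def labelWord {P Λ : Type} (lab : P → P → Λ) (l : List P) : List Λ :=
  (l.zip l.tail).map fun q => lab q.1 q.2

/-- A word of labels is (strictly) increasing. -/
def IsIncreasing {Λ : Type} [Preorder Λ] (w : List Λ) : Prop := w.Chain' (· < ·)

/-- A word of labels is ascent-free: no two consecutive labels strictly increase. -/
def IsAscentFree {Λ : Type} [Preorder Λ] (w : List Λ) : Prop :=
  w.Chain' fun a b => ¬ a < b

/-- An ER-labeling: every closed interval `[x,y]` has a unique increasing maximal chain. -/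
def IsER {P Λ : Type} [PartialOrder P] [Preorder Λ] (lab : P → P → Λ) : Prop :=
  ∀ x y : P, x ≤ y → ∃! l : List P, SatChainIn x y l ∧ IsIncreasing (labelWord lab l)

/-- An ER*-labeling: every closed interval `[x,y]` has a unique ascent-free maximal chain. -/
def IsERStar {P Λ : Type} [PartialOrder P] [Preorder Λ] (lab : P → P → Λ) : Prop :=
  ∀ x y : P, x ≤ y → ∃! l : List P, SatChainIn x y l ∧ IsAscentFree (labelWord lab l)

/-- The chain `l` has an ascent at rank `i ≥ 1`: the `(i-1)`-st and `i`-th entries of its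
label word (0-indexed), i.e. the labels of the covers at ranks `i` and `i+1`,
strictly increase. -/
def HasAscentAt {P Λ : Type} [PartialOrder P] [Preorder Λ] (lab : P → P → Λ)
    (l : List P) (i : ℕ) : Prop :=
  IsSatChain l ∧ 1 ≤ i ∧
    ∃ a b, (labelWord lab l)[i-1]? = some a ∧ (labelWord lab l)[i]? = some b ∧ a < b

/-- `l'` is obtained from `l` by a quadratic exchange at rank `i`: it is a saturated
chain agreeing with `l` everywhere except (possibly) at position `i`, and its label
word is that of `l` with the labels at positions `i-1` and `i` interchanged. -/
def IsSwapAt {P Λ : Type} [PartialOrder P] [Preorder Λ] (lab : P → P → Λ)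
    (l : List P) (i : ℕ) (l' : List P) : Prop :=
  IsSatChain l' ∧ l'.length = l.length ∧ (∀ m : ℕ, m ≠ i → l'[m]? = l[m]?) ∧
    ∃ a b, (labelWord lab l)[i-1]? = some a ∧ (labelWord lab l)[i]? = some b ∧
      labelWord lab l' = ((labelWord lab l).set (i-1) b).set i a

/-- The rank two switching property: every saturated chain with an ascent at rank `i`
admits a unique chain, differing from it only at rank `i`, whose labels at the two
corresponding positions are interchanged and whose other labels agree. -/
def RankTwoSwitch {P Λ : Type} [PartialOrder P] [Preorder Λ] (lab : P → P → Λ) : Prop :=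
  ∀ l : List P, ∀ i : ℕ, HasAscentAt lab l i → ∃! l' : List P, IsSwapAt lab l i l'

/-- The quadratic exchange operator `U_i` at rank `i`: performs the quadratic exchange
at rank `i` if the chain has an ascent there, and is the identity otherwise. -/
noncomputable def Uop {P Λ : Type} [PartialOrder P] [Preorder Λ] {lab : P → P → Λ}
    (hR : RankTwoSwitch lab) (i : ℕ) (l : List P) : List P :=
  if h : HasAscentAt lab l i then (hR l i h).exists.choose else l

/-- One-step quadratic exchange relation on saturated chains. -/
def QExStep {P Λ : Type} [PartialOrder P] [Preorder Λ] (lab : P → P → Λ)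
    (l l' : List P) : Prop :=
  ∃ i : ℕ, HasAscentAt lab l i ∧ IsSwapAt lab l i l'

/-- Two saturated chains are equivalent if they are connected by quadratic exchanges
(i.e., lie in the same connected component of the exchange graph). -/
def ChainEquiv {P Λ : Type} [PartialOrder P] [Preorder Λ] (lab : P → P → Λ)
    (l l' : List P) : Prop :=
  Relation.EqvGen (QExStep lab) l l'

/-- The chain `l` has a double ascent (critical condition) at rank `i`. -/
def DoubleAscentAt {P Λ : Type} [PartialOrder P] [Preorder Λ] (lab : P → P → Λ)
    (l : List P) (i : ℕ) : Prop :=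
  HasAscentAt lab l i ∧ HasAscentAt lab l (i+1)

/-- The braid relation for the quadratic exchange operators: on any saturated chain with
a double ascent at rank `i`, `U_i U_{i+1} U_i = U_{i+1} U_i U_{i+1}`. -/
def BraidRel {P Λ : Type} [PartialOrder P] [Preorder Λ] {lab : P → P → Λ}
    (hR : RankTwoSwitch lab) : Prop :=
  ∀ (l : List P) (i : ℕ), DoubleAscentAt lab l i →
    Uop hR i (Uop hR (i+1) (Uop hR i l)) = Uop hR (i+1) (Uop hR i (Uop hR (i+1) l))

/-- The cancellative property: if `c` is a saturated chain of `[z,x]` and `c₁, c₂` are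
saturated chains of `[x,y]` with `c ∪ c₁` and `c ∪ c₂` related by quadratic exchanges,
then `c₁` and `c₂` are related by quadratic exchanges. -/
def Cancellative {P Λ : Type} [PartialOrder P] [Preorder Λ] (lab : P → P → Λ) : Prop :=
  ∀ (z x y : P) (c c₁ c₂ : List P), SatChainIn z x c → SatChainIn x y c₁ →
    SatChainIn x y c₂ → ChainEquiv lab (c ++ c₁.tail) (c ++ c₂.tail) →
      ChainEquiv lab c₁ c₂


namespace ERAux

set_option linter.unusedSectionVars false

variable {P Λ : Type} [PartialOrder P] [PartialOrder Λ]

theorem labelWord_singleton (lab : P → P → Λ) (a : P) : labelWord lab [a] = [] := rfl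

theorem labelWord_cons₂ (lab : P → P → Λ) (a b : P) (t : List P) :
    labelWord lab (a :: b :: t) = lab a b :: labelWord lab (b :: t) := rfl

theorem labelWord_concat (lab : P → P → Λ) :
    ∀ (l : List P) (c w : P), l.getLast? = some c →
      labelWord lab (l ++ [w]) = labelWord lab l ++ [lab c w]
  | [], c, w, h => by simp at h
  | [a], c, w, h => by
    simp only [List.getLast?_singleton, Option.some.injEq] at h
    subst h; rfl
  | a :: b :: t, c, w, h => by
    have h' : (b :: t).getLast? = some c := by
      rw [List.getLast?_cons_cons] at h; exact h
    have := labelWord_concat lab (b :: t) c w h'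
    simp only [List.cons_append, labelWord_cons₂] at this ⊢
    rw [this]

theorem satChainIn_pairwise {x z : P} {l : List P} (h : SatChainIn x z l) :
    l.Pairwise (· < ·) := by
  exact List.isChain_iff_pairwise.mp (List.IsChain.imp (fun a b hc => hc.lt) h.1.2)

theorem satChainIn_head {x z : P} {l : List P} (h : SatChainIn x z l) :
    ∃ t, l = x :: t := by
  rcases l with _ | ⟨a, t⟩
  · simp [SatChainIn] at h
  · have := h.2.1; simp at this; subst this; exact ⟨t, rfl⟩

theorem satChainIn_last_mem {x z : P} {l : List P} (h : SatChainIn x z l) : z ∈ l := by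
  obtain ⟨h1, h2⟩ := List.mem_getLast?_eq_getLast (l := l) (x := z) h.2.2
  exact h2 ▸ List.getLast_mem h1

theorem satChainIn_mem_le {x z : P} {l : List P} (h : SatChainIn x z l) {w : P}
    (hw : w ∈ l) : x ≤ w ∧ w ≤ z := by
  obtain ⟨t, rfl⟩ := satChainIn_head h
  have hp := satChainIn_pairwise h
  constructor
  · rcases List.mem_cons.mp hw with rfl | hw'
    · exact le_refl _
    · exact (List.rel_of_pairwise_cons hp hw').le
  · -- w ≤ z : z is the last; use getLast? and pairwise
    have hlast := h.2.2
    rcases eq_or_ne w z with rfl | hne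
    · exact le_refl _
    · -- w comes before z in the list
      -- use: getLast? = some z means l = l' ++ [z]
      obtain ⟨l', b, hb⟩ := (List.eq_nil_or_concat (x :: t)).resolve_left (by simp)
      rw [List.concat_eq_append] at hb
      have hz : b = z := by
        rw [hb, List.getLast?_concat] at hlast; simpa using hlast
      rw [hb] at hp hw
      have hw'' : w ∈ l' := by
        rcases List.mem_append.mp hw with h1 | h2
        · exact h1
        · simp at h2; rw [hz] at h2; exact absurd h2 hne
      exact hz ▸ ((List.pairwise_append.mp hp).2.2 w hw'' b (by simp)).le

theorem satChainIn_le {x z : P} {l : List P} (h : SatChainIn x z l) : x ≤ z :=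
  (satChainIn_mem_le h (satChainIn_last_mem h)).1

theorem satChainIn_self {x : P} {l : List P} (h : SatChainIn x x l) : l = [x] := by
  obtain ⟨t, rfl⟩ := satChainIn_head h
  rcases t with _ | ⟨b, t'⟩
  · rfl
  · exfalso
    have hb : x < b := List.rel_of_pairwise_cons (satChainIn_pairwise h) List.mem_cons_self
    have : b ≤ x := (satChainIn_mem_le h (by simp)).2
    exact absurd (hb.trans_le this) (lt_irrefl x)

theorem satChainIn_self' (x : P) : SatChainIn x x [x] := by
  refine ⟨⟨by simp, List.isChain_singleton _⟩, by simp, by simp⟩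

theorem satChainIn_cons₂ {x z b : P} {t : List P} (h : SatChainIn x z (x :: b :: t)) :
    x ⋖ b ∧ SatChainIn b z (b :: t) := by
  refine ⟨h.1.2.rel_head, ⟨by simp, h.1.2.tail⟩, by simp, ?_⟩
  have := h.2.2; rwa [List.getLast?_cons_cons] at this

theorem satChainIn_length_two {x z : P} {l : List P} (h : SatChainIn x z l) (hne : x ≠ z) :
    ∃ b t, l = x :: b :: t := by
  obtain ⟨t, rfl⟩ := satChainIn_head h
  rcases t with _ | ⟨b, t'⟩
  · exfalso; have := h.2.2; simp at this; exact hne this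
  · exact ⟨b, t', rfl⟩

theorem satChainIn_concat {x c w : P} {l : List P} (h : SatChainIn x c l) (hcw : c ⋖ w) :
    SatChainIn x w (l ++ [w]) := by
  obtain ⟨t, rfl⟩ := satChainIn_head h
  refine ⟨⟨by simp, ?_⟩, by simp, by exact List.getLast?_concat⟩
  refine List.IsChain.append h.1.2 (by simp) ?_
  intro a ha b hb
  simp at hb; subst hb
  rw [h.2.2] at ha; simp at ha; subst ha; exact hcw

theorem satChainIn_dropLast {x z c : P} {l : List P} (h : SatChainIn x z (l ++ [z]))
    (hl : l ≠ []) (hc : l.getLast? = some c) : SatChainIn x c l ∧ c ⋖ z := by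
  constructor
  · refine ⟨⟨hl, h.1.2.prefix ⟨[z], rfl⟩⟩, ?_, hc⟩
    have := h.2.1
    rcases l with _ | ⟨a, t⟩
    · simp at hl
    · simpa using this
  · have := List.isChain_append.mp h.1.2
    exact this.2.2 c hc z (by simp)

end ERAux

namespace ERAux

set_option linter.unusedSectionVars false

variable {P Λ : Type} [PartialOrder P] [PartialOrder Λ]

theorem rank_of_satChain (ρ : P → ℕ) (hρ : ∀ a b : P, a ⋖ b → ρ b = ρ a + 1) :
    ∀ (l : List P) (x z : P), SatChainIn x z l → ρ z + 1 = ρ x + l.length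
  | [], x, z, h => absurd rfl h.1.1
  | [a], x, z, h => by
    obtain rfl : a = x := by simpa using h.2.1
    obtain rfl : a = z := by simpa using h.2.2
    simp
  | a :: b :: t, x, z, h => by
    obtain ⟨t', ht⟩ := satChainIn_head h
    simp only [List.cons.injEq] at ht
    obtain ⟨rfl, rfl⟩ := ht
    obtain ⟨hxb, hrest⟩ := satChainIn_cons₂ h
    have := rank_of_satChain ρ hρ (b :: t) b z hrest
    have hb := hρ a b hxb
    simp only [List.length_cons] at this ⊢
    omega

theorem isAscentFree_concat {w : List Λ} {b : Λ} :
    IsAscentFree (w ++ [b]) ↔ IsAscentFree w ∧ ∀ a ∈ w.getLast?, ¬ a < b := by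
  unfold IsAscentFree
  simp only [List.Chain']
  rw [List.isChain_append]
  simp

section ER

variable (lab : P → P → Λ) (hER : IsER lab) (y : P)

noncomputable def inc (z : P) : List P :=
  if h : z ≤ y then (hER z y h).exists.choose else []

theorem inc_spec {z : P} (h : z ≤ y) :
    SatChainIn z y (inc lab hER y z) ∧ IsIncreasing (labelWord lab (inc lab hER y z)) := by
  rw [inc, dif_pos h]
  exact (hER z y h).exists.choose_spec

theorem inc_unique {z : P} (h : z ≤ y) {l : List P} (h1 : SatChainIn z y l)
    (h2 : IsIncreasing (labelWord lab l)) : l = inc lab hER y z :=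
  (hER z y h).unique ⟨h1, h2⟩ (inc_spec lab hER y h)

noncomputable def nxt (z : P) : P := (inc lab hER y z).getD 1 z

theorem inc_self : inc lab hER y y = [y] :=
  (satChainIn_self (inc_spec lab hER y (le_refl y)).1).symm ▸ rfl

theorem inc_eq_cons {z : P} (h : z < y) :
    ∃ t, inc lab hER y z = z :: nxt lab hER y z :: t := by
  obtain ⟨b, t, hbt⟩ := satChainIn_length_two (inc_spec lab hER y h.le).1 h.ne
  refine ⟨t, ?_⟩
  have : nxt lab hER y z = b := by rw [nxt, hbt]; rfl
  rw [this, hbt]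

theorem nxt_covby {z : P} (h : z < y) : z ⋖ nxt lab hER y z := by
  obtain ⟨t, ht⟩ := inc_eq_cons lab hER y h
  have := (inc_spec lab hER y h.le).1
  rw [ht] at this
  exact (satChainIn_cons₂ this).1

theorem nxt_le {z : P} (h : z < y) : nxt lab hER y z ≤ y := by
  obtain ⟨t, ht⟩ := inc_eq_cons lab hER y h
  have := (inc_spec lab hER y h.le).1
  rw [ht] at this
  exact satChainIn_le (satChainIn_cons₂ this).2

theorem inc_of_nxt {z : P} (h : z < y) :
    inc lab hER y (nxt lab hER y z) = (inc lab hER y z).tail := by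
  obtain ⟨t, ht⟩ := inc_eq_cons lab hER y h
  have hsc := (inc_spec lab hER y h.le).1
  have hinc := (inc_spec lab hER y h.le).2
  rw [ht] at hsc hinc ⊢
  refine (inc_unique lab hER y (nxt_le lab hER y h) (satChainIn_cons₂ hsc).2 ?_).symm
  rw [labelWord_cons₂] at hinc
  exact hinc.tail

theorem label_lt {z : P} (h : z < y) (h2 : nxt lab hER y z ≠ y) :
    lab z (nxt lab hER y z) < lab (nxt lab hER y z) (nxt lab hER y (nxt lab hER y z)) := by
  set w := nxt lab hER y z with hw
  have hwy : w < y := lt_of_le_of_ne (nxt_le lab hER y h) h2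
  obtain ⟨t, ht⟩ := inc_eq_cons lab hER y h
  obtain ⟨t', ht'⟩ := inc_eq_cons lab hER y hwy
  have h3 : inc lab hER y w = (inc lab hER y z).tail := inc_of_nxt lab hER y h
  rw [ht] at h3; rw [ht'] at h3
  simp only [List.tail_cons] at h3
  have hinc := (inc_spec lab hER y h.le).2
  rw [ht, ← h3, labelWord_cons₂, labelWord_cons₂] at hinc
  exact hinc.rel_head

theorem first_step_eq {c z : P} (hcz : c ⋖ z) (hzy : z ≤ y)
    (hcond : z ≠ y → lab c z < lab z (nxt lab hER y z)) : nxt lab hER y c = z := by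
  have hcy : c < y := lt_of_lt_of_le hcz.lt hzy
  obtain ⟨t, ht⟩ := satChainIn_head (inc_spec lab hER y hzy).1
  have hsc : SatChainIn c y (c :: inc lab hER y z) := by
    have h0 := (inc_spec lab hER y hzy).1
    refine ⟨⟨by simp, ?_⟩, by simp, ?_⟩
    · have hch := h0.1.2
      rw [ht] at hch
      rw [ht]
      exact List.isChain_cons_cons.mpr ⟨hcz, hch⟩
    · rw [ht, List.getLast?_cons_cons, ← ht]
      exact h0.2.2
  have hincr : IsIncreasing (labelWord lab (c :: inc lab hER y z)) := by
    rw [ht, labelWord_cons₂]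
    refine List.IsChain.cons (ht ▸ (inc_spec lab hER y hzy).2) ?_
    intro u hu
    rcases eq_or_lt_of_le hzy with rfl | hlt
    · have hz' : inc lab hER z z = [z] := inc_self lab hER _
      rw [hz'] at ht
      simp only [List.cons.injEq, true_and] at ht
      subst ht
      simp [labelWord] at hu
    · obtain ⟨t', ht'⟩ := inc_eq_cons lab hER y hlt
      rw [ht'] at ht
      simp only [List.cons.injEq, true_and] at ht
      subst ht
      rw [labelWord_cons₂] at hu
      simp only [List.head?_cons, Option.mem_def, Option.some.injEq] at hu
      subst hu
      exact hcond hlt.ne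
  have := inc_unique lab hER y hcy.le hsc hincr
  rw [nxt, ← this, ht]
  rfl

end ER

end ERAux

namespace ERAux

set_option linter.unusedSectionVars false
set_option maxHeartbeats 1000000

variable {P Λ : Type} [PartialOrder P] [PartialOrder Λ]

section Invol

variable [Fintype P] (lab : P → P → Λ) (hER : IsER lab)

def Cset (x z : P) : Set (List P) :=
  {l | SatChainIn x z l ∧ IsAscentFree (labelWord lab l)}

def Eset (x y : P) : Set (List P) :=
  {l | ∃ z, z ≤ y ∧ SatChainIn x z l ∧ IsAscentFree (labelWord lab l)}

theorem chain_finite_aux {s : Set (List P)}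
    (hs : ∀ l ∈ s, ∃ x z : P, SatChainIn x z l) : s.Finite := by
  refine (List.finite_length_le P (Fintype.card P)).subset ?_
  intro l hl
  obtain ⟨x, z, h⟩ := hs l hl
  have : l.Nodup := (satChainIn_pairwise h).imp (fun hab => hab.ne)
  exact this.length_le_card

theorem Cset_finite (x z : P) : (Cset lab x z).Finite :=
  chain_finite_aux (fun l hl => ⟨x, z, hl.1⟩)

theorem Eset_finite (x y : P) : (Eset lab x y).Finite :=
  chain_finite_aux (fun l hl => ⟨x, hl.choose, hl.choose_spec.2.1⟩)

noncomputable def gOp (x y : P) (l : List P) : List P :=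
  if l.getLastD x < y ∧
      IsAscentFree (labelWord lab (l ++ [nxt lab hER y (l.getLastD x)])) then
    l ++ [nxt lab hER y (l.getLastD x)]
  else l.dropLast

theorem gOp_spec (x y : P) (hxy : x < y) {l : List P} (hl : l ∈ Eset lab x y) :
    gOp lab hER x y l ∈ Eset lab x y ∧ gOp lab hER x y (gOp lab hER x y l) = l ∧
      ∃ m, (l.length = m + 1 ∧ (gOp lab hER x y l).length = m + 2) ∨
        (l.length = m + 2 ∧ (gOp lab hER x y l).length = m + 1) := by
  obtain ⟨z, hzy, hsc, haf⟩ := hl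
  have hDl : l.getLastD x = z := by
    rw [List.getLastD_eq_getLast?, hsc.2.2]; rfl
  by_cases hg : z < y ∧ IsAscentFree (labelWord lab (l ++ [nxt lab hER y z]))
  · -- grow case
    set w := nxt lab hER y z with hw
    have hgl : gOp lab hER x y l = l ++ [w] := by
      rw [gOp]; simp only [hDl]; exact if_pos hg
    have hcov : z ⋖ w := nxt_covby lab hER y hg.1
    have hsc' : SatChainIn x w (l ++ [w]) := satChainIn_concat hsc hcov
    have hwle : w ≤ y := nxt_le lab hER y hg.1
    have hmem : l ++ [w] ∈ Eset lab x y := ⟨w, hwle, hsc', hg.2⟩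
    have hD2 : (l ++ [w]).getLastD x = w := by
      rw [List.getLastD_eq_getLast?, List.getLast?_concat]; rfl
    have e1 : labelWord lab (l ++ [w]) = labelWord lab l ++ [lab z w] :=
      labelWord_concat lab l z w hsc.2.2
    have hng : ¬ ((l ++ [w]).getLastD x < y ∧
        IsAscentFree (labelWord lab ((l ++ [w]) ++
          [nxt lab hER y ((l ++ [w]).getLastD x)]))) := by
      rw [hD2]
      rintro ⟨hwy, habs⟩
      have hlabel : lab z w < lab w (nxt lab hER y w) := label_lt lab hER y hg.1 hwy.ne
      have e2 : labelWord lab ((l ++ [w]) ++ [nxt lab hER y w]) =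
          labelWord lab (l ++ [w]) ++ [lab w (nxt lab hER y w)] :=
        labelWord_concat lab (l ++ [w]) w _ List.getLast?_concat
      rw [e2] at habs
      have h3 := (isAscentFree_concat.mp habs).2
      rw [e1] at h3
      exact (h3 _ (by rw [List.getLast?_concat]; rfl)) hlabel
    have hggl : gOp lab hER x y (l ++ [w]) = l := by
      rw [gOp, if_neg hng]
      exact List.dropLast_concat
    have hlen : 1 ≤ l.length := List.length_pos_iff.mpr hsc.1.1
    refine ⟨hgl ▸ hmem, by rw [hgl, hggl], ⟨l.length - 1, Or.inl ⟨by omega, ?_⟩⟩⟩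
    rw [hgl]
    simp only [List.length_append, List.length_singleton]
    omega
  · -- shrink case
    have hxz : x ≠ z := by
      rintro rfl
      apply hg
      have hl1 : l = [x] := satChainIn_self hsc
      subst hl1
      refine ⟨hxy, ?_⟩
      rw [labelWord_concat lab [x] x _ rfl]
      exact List.isChain_singleton _
    obtain ⟨b, t, hbt⟩ := satChainIn_length_two hsc hxz
    have hlen2 : 2 ≤ l.length := by rw [hbt]; simp
    have hld : l.dropLast ≠ [] := by
      have : l.dropLast.length = l.length - 1 := List.length_dropLast
      intro h0; rw [h0] at this; simp at this; omega
    set c := l.dropLast.getLast hld with hcdef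
    have hc : l.dropLast.getLast? = some c := List.getLast?_eq_getLast_of_ne_nil hld
    have hrec : l = l.dropLast ++ [z] :=
      (List.dropLast_append_getLast? z (by rw [hsc.2.2]; rfl)).symm
    have hsplit := satChainIn_dropLast (hrec ▸ hsc) hld hc
    obtain ⟨hsc', hcz⟩ := hsplit
    have e1 : labelWord lab l = labelWord lab l.dropLast ++ [lab c z] := by
      have := labelWord_concat lab l.dropLast c z hc
      rw [← hrec] at this; exact this
    have haf' : IsAscentFree (labelWord lab l.dropLast) :=
      List.IsChain.prefix haf ⟨[lab c z], e1.symm⟩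
    have hgl : gOp lab hER x y l = l.dropLast := by
      rw [gOp]; simp only [hDl]; exact if_neg hg
    have hcy : c < y := lt_of_lt_of_le (lt_of_lt_of_le hcz.lt hzy) (le_refl y)
    have hmem : l.dropLast ∈ Eset lab x y := ⟨c, hcy.le, hsc', haf'⟩
    have hD2 : l.dropLast.getLastD x = c := by
      rw [List.getLastD_eq_getLast?, hc]; rfl
    have hnc : nxt lab hER y c = z := by
      apply first_step_eq lab hER y hcz hzy
      intro hzney
      have hzy' : z < y := lt_of_le_of_ne hzy hzney
      have hnaf : ¬ IsAscentFree (labelWord lab (l ++ [nxt lab hER y z])) :=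
        fun h => hg ⟨hzy', h⟩
      have e2 : labelWord lab (l ++ [nxt lab hER y z]) =
          labelWord lab l ++ [lab z (nxt lab hER y z)] :=
        labelWord_concat lab l z _ hsc.2.2
      rw [e2, isAscentFree_concat] at hnaf
      push_neg at hnaf
      obtain ⟨a, ha, halt⟩ := hnaf haf
      rw [e1, List.getLast?_concat] at ha
      simp only [Option.mem_def, Option.some.injEq] at ha
      rw [ha]
      exact halt
    have hgrow : l.dropLast ++ [nxt lab hER y c] = l := by rw [hnc, ← hrec]
    have hggl : gOp lab hER x y l.dropLast = l := by
      rw [gOp]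
      simp only [hD2]
      rw [if_pos ⟨hcy, by rw [hgrow]; exact haf⟩]
      exact hgrow
    refine ⟨hgl ▸ hmem, by rw [hgl, hggl], ⟨l.length - 2, Or.inr ⟨by omega, ?_⟩⟩⟩
    rw [hgl, List.length_dropLast]
    omega

end Invol

end ERAux

namespace ERAux

set_option linter.unusedSectionVars false
set_option maxHeartbeats 1000000

variable {P Λ : Type} [PartialOrder P] [PartialOrder Λ] [Fintype P]
variable (lab : P → P → Λ)

theorem key_identity (hER : IsER lab) (ρ : P → ℕ) (hρ : ∀ a b : P, a ⋖ b → ρ b = ρ a + 1)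
    (x y : P) (hxy : x < y) :
    ∑ z ∈ Finset.univ.filter (fun z : P => x ≤ z ∧ z ≤ y),
      (-1 : ℤ) ^ (ρ z - ρ x) * ((Cset_finite lab x z).toFinset.card : ℤ) = 0 := by
  classical
  have hmain : ∑ l ∈ (Eset_finite lab x y).toFinset, (-1 : ℤ) ^ (l.length - 1) = 0 := by
    refine Finset.sum_involution (fun l _ => gOp lab hER x y l) ?_ ?_ ?_ ?_
    · intro l hl
      obtain ⟨-, -, m, hm⟩ :=
        gOp_spec lab hER x y hxy ((Eset_finite lab x y).mem_toFinset.mp hl)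
      rcases hm with ⟨h1, h2⟩ | ⟨h1, h2⟩ <;> rw [h1, h2]
      · have e1 : m + 1 - 1 = m := by omega
        have e2 : m + 2 - 1 = m + 1 := by omega
        rw [e1, e2, pow_succ]; ring
      · have e1 : m + 2 - 1 = m + 1 := by omega
        have e2 : m + 1 - 1 = m := by omega
        rw [e1, e2, pow_succ]; ring
    · intro l hl hne heq
      have heq' : gOp lab hER x y l = l := heq
      obtain ⟨-, -, m, hm⟩ :=
        gOp_spec lab hER x y hxy ((Eset_finite lab x y).mem_toFinset.mp hl)
      rcases hm with ⟨h1, h2⟩ | ⟨h1, h2⟩ <;> rw [heq', h1] at h2 <;> omega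
    · intro l hl
      exact (Eset_finite lab x y).mem_toFinset.mpr
        (gOp_spec lab hER x y hxy ((Eset_finite lab x y).mem_toFinset.mp hl)).1
    · intro l hl
      exact (gOp_spec lab hER x y hxy ((Eset_finite lab x y).mem_toFinset.mp hl)).2.1
  have hmaps : ∀ l ∈ (Eset_finite lab x y).toFinset,
      l.getLastD x ∈ Finset.univ.filter (fun z : P => x ≤ z ∧ z ≤ y) := by
    intro l hl
    obtain ⟨z, hzy, hsc, -⟩ := (Eset_finite lab x y).mem_toFinset.mp hl
    have hD : l.getLastD x = z := by rw [List.getLastD_eq_getLast?, hsc.2.2]; rfl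
    rw [hD, Finset.mem_filter]
    exact ⟨Finset.mem_univ _, satChainIn_le hsc, hzy⟩
  have hfib := Finset.sum_fiberwise_of_maps_to hmaps (fun l => (-1 : ℤ) ^ (l.length - 1))
  rw [hmain] at hfib
  rw [← hfib]
  apply Finset.sum_congr rfl
  intro z hz
  rw [Finset.mem_filter] at hz
  obtain ⟨-, hxz, hzy⟩ := hz
  have hfibeq : (Eset_finite lab x y).toFinset.filter (fun l => l.getLastD x = z) =
      (Cset_finite lab x z).toFinset := by
    ext l
    simp only [Finset.mem_filter, Set.Finite.mem_toFinset]
    constructor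
    · rintro ⟨⟨z', hz'y, hsc, haf⟩, hD⟩
      have hz' : z' = z := by rw [← hD, List.getLastD_eq_getLast?, hsc.2.2]; rfl
      exact ⟨hz' ▸ hsc, haf⟩
    · rintro ⟨hsc, haf⟩
      refine ⟨⟨z, hzy, hsc, haf⟩, ?_⟩
      rw [List.getLastD_eq_getLast?, hsc.2.2]; rfl
  rw [hfibeq]
  have hconst : ∀ l ∈ (Cset_finite lab x z).toFinset,
      (-1 : ℤ) ^ (l.length - 1) = (-1 : ℤ) ^ (ρ z - ρ x) := by
    intro l hl
    rw [Set.Finite.mem_toFinset] at hl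
    have hr := rank_of_satChain ρ hρ l x z hl.1
    have h1 : 1 ≤ l.length := List.length_pos_iff.mpr hl.1.1.1
    have he : l.length - 1 = ρ z - ρ x := by omega
    rw [he]
  rw [Finset.sum_congr rfl hconst, Finset.sum_const, nsmul_eq_mul]
  ring

theorem natCard_eq (x z : P) :
    (Nat.card {l : List P // SatChainIn x z l ∧ IsAscentFree (labelWord lab l)} : ℕ) =
      (Cset_finite lab x z).toFinset.card := by
  rw [show Nat.card {l : List P // SatChainIn x z l ∧ IsAscentFree (labelWord lab l)} =
      Nat.card (Cset lab x z) from
    Nat.card_congr (Equiv.subtypeEquivRight (fun l => Iff.rfl))]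
  rw [Nat.card_coe_set_eq, Set.ncard_eq_toFinset_card _ (Cset_finite lab x z)]

theorem Cset_self (x : P) : (Cset_finite lab x x).toFinset = {[x]} := by
  ext l
  simp only [Set.Finite.mem_toFinset, Finset.mem_singleton]
  constructor
  · intro hl; exact satChainIn_self hl.1
  · rintro rfl
    exact ⟨satChainIn_self' x, List.isChain_nil⟩

end ERAux

theorem mobius_eq_of_isER' {P Λ : Type} [PartialOrder P] [Fintype P] [OrderBot P]
    [PartialOrder Λ] (ρ : P → ℕ) (hρ0 : ρ (⊥ : P) = 0)
    (hρ : ∀ x y : P, x ⋖ y → ρ y = ρ x + 1)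
    (lab : P → P → Λ) (hER : IsER lab) :
    ∀ x y : P, x ≤ y →
      mobius x y = (-1 : ℤ) ^ (ρ y - ρ x) *
        Nat.card {l : List P // SatChainIn x y l ∧ IsAscentFree (labelWord lab l)} := by
  classical
  have H : ∀ n : ℕ, ∀ y x : P, (Finset.univ.filter fun z : P => z < y).card < n → x ≤ y →
      mobius x y = (-1 : ℤ) ^ (ρ y - ρ x) * ((ERAux.Cset_finite lab x y).toFinset.card : ℤ) := by
    intro n
    induction n with
    | zero => intro y x h; omega
    | succ n IH =>
      intro y x hcard hxy
      rw [mobius]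
      by_cases hxy' : x = y
      · subst hxy'
        rw [if_pos rfl, ERAux.Cset_self lab]
        simp
      · rw [if_neg hxy']
        have hlt : x < y := lt_of_le_of_ne hxy hxy'
        rw [Finset.sum_attach (Finset.univ.filter fun z : P => x ≤ z ∧ z < y)
          (fun z => mobius x z)]
        have hIH : ∀ z ∈ Finset.univ.filter (fun z : P => x ≤ z ∧ z < y),
            mobius x z = (-1 : ℤ) ^ (ρ z - ρ x) *
              ((ERAux.Cset_finite lab x z).toFinset.card : ℤ) := by
          intro z hz
          rw [Finset.mem_filter] at hz
          obtain ⟨-, hxz, hzy⟩ := hz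
          have hsub : (Finset.univ.filter fun w : P => w < z).card <
              (Finset.univ.filter fun w : P => w < y).card := by
            refine Finset.card_lt_card
              ((Finset.ssubset_iff_of_subset fun w hw => ?_).mpr ⟨z, ?_, ?_⟩)
            · simp only [Finset.mem_filter] at hw ⊢
              exact ⟨hw.1, hw.2.trans hzy⟩
            · simp only [Finset.mem_filter]
              exact ⟨Finset.mem_univ _, hzy⟩
            · simp only [Finset.mem_filter, not_and]
              exact fun _ => lt_irrefl _
          exact IH z x (by omega) hxz
        rw [Finset.sum_congr rfl hIH]
        have hkey := ERAux.key_identity lab hER ρ hρ x y hlt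
        have hsplit : Finset.univ.filter (fun z : P => x ≤ z ∧ z ≤ y) =
            insert y (Finset.univ.filter (fun z : P => x ≤ z ∧ z < y)) := by
          ext u
          simp only [Finset.mem_filter, Finset.mem_insert, Finset.mem_univ, true_and]
          constructor
          · rintro ⟨hxu, huy⟩
            rcases eq_or_lt_of_le huy with rfl | hlt'
            · exact Or.inl rfl
            · exact Or.inr ⟨hxu, hlt'⟩
          · rintro (rfl | ⟨hxu, huy⟩)
            · exact ⟨hxy, le_refl _⟩
            · exact ⟨hxu, huy.le⟩
        rw [hsplit, Finset.sum_insert (by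
          simp only [Finset.mem_filter, Finset.mem_univ, true_and, not_and]
          exact fun _ => lt_irrefl _)] at hkey
        linarith [hkey]
  intro x y hxy
  rw [show ((Nat.card {l : List P // SatChainIn x y l ∧ IsAscentFree (labelWord lab l)} : ℕ) : ℤ)
      = ((ERAux.Cset_finite lab x y).toFinset.card : ℤ) by rw [ERAux.natCard_eq]]
  exact H ((Finset.univ.filter fun z : P => z < y).card + 1) y x (by omega) hxy

/-- **Theorem (cf. Theorem 3.14.2 of Stanley).**
If `λ` is an ER-labeling of a finite graded poset `P` with minimum `⊥`, then for all
`x ≤ y`, `μ(x,y) = (-1)^{ρ(y)-ρ(x)} · #(ascent-free maximal chains of `[x,y]`)`. -/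
theorem mobius_eq_of_isER {P Λ : Type} [PartialOrder P] [Fintype P] [OrderBot P]
    [PartialOrder Λ] (ρ : P → ℕ) (hρ0 : ρ (⊥ : P) = 0)
    (hρ : ∀ x y : P, x ⋖ y → ρ y = ρ x + 1)
    (lab : P → P → Λ) (hER : IsER lab) :
    ∀ x y : P, x ≤ y →
      mobius x y = (-1 : ℤ) ^ (ρ y - ρ x) *
        Nat.card {l : List P // SatChainIn x y l ∧ IsAscentFree (labelWord lab l)} :=
  mobius_eq_of_isER' ρ hρ0 hρ lab hER
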